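/- Let l₁, …, l_T and δ be non-negative real numbers with δ > 0. Then ∑_{t=1}^T l_t² / (δ + ∑_{i=1}^t l_i²) ≤ log(1 + (1/δ)·∑_{t=1}^T l_t²). -/

import Mathlib

lemma key_div_le (a x : ℝ) (ha : 0 < a) (hx : 0 ≤ x) :
    x / (a + x) ≤ Real.log (a + x) - Real.log a := by
  have hax : 0 < a + x := by linarith
  have h := Real.log_le_sub_one_of_pos (x := a / (a + x)) (by positivity)
  rw [Real.log_div (ne_of_gt ha) (ne_of_gt hax)] at h
  have : a / (a + x) - 1 = -(x / (a + x)) := by field_simp; ring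
  linarith [this ▸ h]

/-- Let l₁,…,l_T and δ > 0 be non-negative reals. Then
∑_{t=1}^T l_t²/(δ + ∑_{i=1}^t l_i²) ≤ log(1 + (1/δ)·∑_{t=1}^T l_t²). -/
theorem sum_div_le_log (T : ℕ) (l : ℕ → ℝ) (δ : ℝ) (hδ : 0 < δ)
    (hl : ∀ t, 0 ≤ l t) :
    ∑ t ∈ Finset.range T, l t ^ 2 / (δ + ∑ i ∈ Finset.range (t + 1), l i ^ 2) ≤
      Real.log (1 + (1 / δ) * ∑ t ∈ Finset.range T, l t ^ 2) := by
  have hS : ∀ n, 0 ≤ ∑ i ∈ Finset.range n, l i ^ 2 := fun n =>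
    Finset.sum_nonneg fun i _ => sq_nonneg _
  have hrhs : ∀ n, Real.log (1 + (1 / δ) * ∑ t ∈ Finset.range n, l t ^ 2)
      = Real.log (δ + ∑ t ∈ Finset.range n, l t ^ 2) - Real.log δ := by
    intro n
    rw [← Real.log_div (by positivity) (ne_of_gt hδ)]
    congr 1
    field_simp
  rw [hrhs]
  induction T with
  | zero => simp
  | succ n ih =>
    rw [Finset.sum_range_succ, Finset.sum_range_succ (f := fun t => l t ^ 2)]
    have hkey := key_div_le (δ + ∑ i ∈ Finset.range n, l i ^ 2) (l n ^ 2)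
      (by linarith [hS n]) (sq_nonneg _)
    have : δ + (∑ i ∈ Finset.range n, l i ^ 2 + l n ^ 2)
        = (δ + ∑ i ∈ Finset.range n, l i ^ 2) + l n ^ 2 := by ring
    rw [this]
    linarith
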